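/- Let G be a finite abelian group, c : G → ℂ a function, and S ⊆ G nonempty. Let λ = max over nontrivial characters χ of |ĉ(χ)|. Then |(1/|S|)·Σ_{x∈S} c(x) − (1/|G|)·Σ_{g∈G} c(g)| ≤ λ/√|S|. -/

import Mathlib

noncomputable def charEquivC (G : Type*) [CommGroup G] : (G →* ℂˣ) ≃ AddChar (Additive G) ℂ where
  toFun χ := AddChar.toMonoidHomEquiv.symm
    ((Units.coeHom ℂ).comp (χ.comp (MulEquiv.multiplicativeAdditive G).toMonoidHom))
  invFun ψ := ((AddChar.toMonoidHomEquiv ψ).comp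
    (MulEquiv.multiplicativeAdditive G).symm.toMonoidHom).toHomUnits
  left_inv χ := by ext g; simp [MonoidHom.coe_toHomUnits]
  right_inv ψ := by ext a; simp [MonoidHom.coe_toHomUnits]

lemma charEquivC_apply {G : Type*} [CommGroup G] (χ : G →* ℂˣ) (g : G) :
    charEquivC G χ (Additive.ofMul g) = (χ g : ℂ) := rfl

lemma charEquivC_one {G : Type*} [CommGroup G] : charEquivC G 1 = 0 := by
  ext a; simp [charEquivC]

/-- Single-set consequence of the expander mixing lemma for abelian Cayley color graphs. -/
theorem stmt2 {G : Type*} [CommGroup G] [Fintype G] (c : G → ℂ)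
    (S : Finset G) (hS : S.Nonempty) (lam : ℝ)
    (hlam : IsGreatest {x : ℝ | ∃ χ : G →* ℂˣ, χ ≠ 1 ∧
      x = ‖∑ g : G, c g * (starRingEnd ℂ) (χ g : ℂ)‖} lam) :
    ‖(1 / (S.card : ℂ)) * (∑ x ∈ S, c x) -
        (1 / (Fintype.card G : ℂ)) * (∑ g : G, c g)‖ ≤
      lam / Real.sqrt (S.card : ℝ) := by
  classical
  set n := Fintype.card G with hn
  set s := S.card with hsdef
  have hs0 : 0 < s := hS.card_pos
  have hn0 : 0 < n := Fintype.card_pos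
  set u : AddChar (Additive G) ℂ → ℂ := fun ψ => ∑ x ∈ S, ψ (Additive.ofMul x) with hu
  set ch : AddChar (Additive G) ℂ → ℂ :=
    fun ψ => ∑ g : G, c g * (starRingEnd ℂ) (ψ (Additive.ofMul g)) with hch
  have hcardA : Fintype.card (AddChar (Additive G) ℂ) = n := by
    rw [AddChar.card_eq]; exact Fintype.card_congr Additive.toMul
  -- orthogonality helper
  have orth : ∀ x g : G, ∑ ψ : AddChar (Additive G) ℂ,
      ψ (Additive.ofMul x - Additive.ofMul g) = if x = g then (n : ℂ) else 0 := by
    intro x g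
    rw [AddChar.sum_apply_eq_ite]
    simp [sub_eq_zero, hn]
  have prod_eq : ∀ (ψ : AddChar (Additive G) ℂ) (x g : G),
      ψ (Additive.ofMul x - Additive.ofMul g)
        = (starRingEnd ℂ) (ψ (Additive.ofMul g)) * ψ (Additive.ofMul x) := by
    intro ψ x g
    rw [sub_eq_add_neg, AddChar.map_add_eq_mul, AddChar.map_neg_eq_conj, mul_comm]
  -- key identity
  have key : ∑ ψ : AddChar (Additive G) ℂ, ch ψ * u ψ = (n : ℂ) * ∑ x ∈ S, c x := by
    have h1 : ∀ ψ : AddChar (Additive G) ℂ, ch ψ * u ψ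
        = ∑ g : G, ∑ x ∈ S, c g * ψ (Additive.ofMul x - Additive.ofMul g) := by
      intro ψ
      rw [hch, hu, Finset.sum_mul_sum]
      refine Finset.sum_congr rfl fun g _ => Finset.sum_congr rfl fun x _ => ?_
      rw [prod_eq ψ x g]; ring
    simp_rw [h1]
    rw [Finset.sum_comm]
    have h2 : ∀ g : G, ∑ ψ : AddChar (Additive G) ℂ, ∑ x ∈ S,
        c g * ψ (Additive.ofMul x - Additive.ofMul g)
        = ∑ x ∈ S, c g * (if x = g then (n : ℂ) else 0) := by
      intro g
      rw [Finset.sum_comm]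
      exact Finset.sum_congr rfl fun x _ => by
        rw [← Finset.mul_sum, orth x g]
    simp_rw [h2, mul_ite, mul_zero]
    rw [Finset.sum_comm]
    rw [Finset.mul_sum]
    refine Finset.sum_congr rfl fun x hx => ?_
    simp [Finset.sum_ite_eq, hx, mul_comm]
  -- Parseval for the indicator
  have pars : ∑ ψ : AddChar (Additive G) ℂ, ‖u ψ‖ ^ 2 = (n : ℝ) * s := by
    have h1 : ∀ ψ : AddChar (Additive G) ℂ, ((‖u ψ‖ : ℂ)) ^ 2
        = ∑ g ∈ S, ∑ x ∈ S, ψ (Additive.ofMul x - Additive.ofMul g) := by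
      intro ψ
      rw [← Complex.mul_conj', hu]
      rw [map_sum, Finset.sum_mul_sum]
      rw [Finset.sum_comm]
      refine Finset.sum_congr rfl fun g _ => Finset.sum_congr rfl fun x _ => ?_
      rw [prod_eq ψ x g, mul_comm]
    have h2 : ∑ ψ : AddChar (Additive G) ℂ, ((‖u ψ‖ : ℂ)) ^ 2 = (n : ℂ) * s := by
      simp_rw [h1]
      rw [Finset.sum_comm]
      have : ∀ g ∈ S, ∑ ψ : AddChar (Additive G) ℂ, ∑ x ∈ S,
          ψ (Additive.ofMul x - Additive.ofMul g) = (n : ℂ) := by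
        intro g hg
        rw [Finset.sum_comm]
        simp_rw [orth]
        simp [Finset.sum_ite_eq, hg]
      rw [Finset.sum_congr rfl this, Finset.sum_const, hsdef, nsmul_eq_mul, mul_comm]
    have := h2
    push_cast at this
    exact_mod_cast this
  -- Cauchy–Schwarz: sum of norms
  have CS : ∑ ψ : AddChar (Additive G) ℂ, ‖u ψ‖ ≤ (n : ℝ) * Real.sqrt s := by
    have h := Finset.sum_mul_sq_le_sq_mul_sq Finset.univ (fun _ => (1 : ℝ))
      (fun ψ : AddChar (Additive G) ℂ => ‖u ψ‖)
    simp only [one_mul, one_pow, Finset.sum_const, Finset.card_univ, nsmul_eq_mul, mul_one]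
      at h
    rw [hcardA, pars] at h
    have hB : (0 : ℝ) ≤ ∑ ψ : AddChar (Additive G) ℂ, ‖u ψ‖ :=
      Finset.sum_nonneg fun _ _ => norm_nonneg _
    have : (∑ ψ : AddChar (Additive G) ℂ, ‖u ψ‖) ^ 2 ≤ ((n : ℝ) * Real.sqrt s) ^ 2 := by
      calc (∑ ψ : AddChar (Additive G) ℂ, ‖u ψ‖) ^ 2 ≤ (n : ℝ) * ((n : ℝ) * s) := h
        _ = ((n : ℝ) * Real.sqrt s) ^ 2 := by
            rw [mul_pow, Real.sq_sqrt (by positivity)]; ring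
    have h3 := Real.sqrt_le_sqrt this
    rwa [Real.sqrt_sq hB, Real.sqrt_sq (by positivity)] at h3
  -- lam is nonnegative
  obtain ⟨χ₀, hχ₀, hlam0⟩ := hlam.1
  have hlam_nonneg : 0 ≤ lam := hlam0 ▸ norm_nonneg _
  -- each nontrivial Fourier coefficient is bounded by lam
  have hbound : ∀ ψ : AddChar (Additive G) ℂ, ψ ≠ 0 → ‖ch ψ‖ ≤ lam := by
    intro ψ hψ
    set χ := (charEquivC G).symm ψ with hχdef
    have hψχ : charEquivC G χ = ψ := (charEquivC G).apply_symm_apply ψ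
    have hχ1 : χ ≠ 1 := by
      intro h
      exact hψ (by rw [← hψχ, h, charEquivC_one])
    refine hlam.2 ⟨χ, hχ1, ?_⟩
    simp only [hch, ← hψχ, charEquivC_apply]
  -- split off the trivial character
  have split : ∑ ψ : AddChar (Additive G) ℂ, ch ψ * u ψ
      = ch 0 * u 0 + ∑ ψ ∈ Finset.univ.erase 0, ch ψ * u ψ :=
    (Finset.add_sum_erase _ _ (Finset.mem_univ 0)).symm
  have hch0 : ch 0 = ∑ g : G, c g := by simp [hch]
  have hu0 : u 0 = (s : ℂ) := by simp [hu, hsdef]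
  set R := ∑ ψ ∈ Finset.univ.erase (0 : AddChar (Additive G) ℂ), ch ψ * u ψ with hRdef
  have hsC : (s : ℂ) ≠ 0 := Nat.cast_ne_zero.2 hs0.ne'
  have hnC : (n : ℂ) ≠ 0 := Nat.cast_ne_zero.2 hn0.ne'
  have hA : (n : ℂ) * ∑ x ∈ S, c x = (∑ g : G, c g) * s + R := by
    rw [← key, split, hch0, hu0]
  have main : (1 / (s : ℂ)) * (∑ x ∈ S, c x) - (1 / (n : ℂ)) * (∑ g : G, c g)
      = (1 / ((s : ℂ) * n)) * R := by
    field_simp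
    linear_combination hA
  have hRnorm : ‖R‖ ≤ lam * ((n : ℝ) * Real.sqrt s) := by
    calc ‖R‖ ≤ ∑ ψ ∈ Finset.univ.erase (0 : AddChar (Additive G) ℂ), ‖ch ψ * u ψ‖ :=
          norm_sum_le _ _
      _ ≤ ∑ ψ ∈ Finset.univ.erase (0 : AddChar (Additive G) ℂ), lam * ‖u ψ‖ := by
          refine Finset.sum_le_sum fun ψ hψ => ?_
          rw [norm_mul]
          exact mul_le_mul_of_nonneg_right (hbound ψ (Finset.ne_of_mem_erase hψ))
            (norm_nonneg _)
      _ = lam * ∑ ψ ∈ Finset.univ.erase (0 : AddChar (Additive G) ℂ), ‖u ψ‖ :=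
          (Finset.mul_sum _ _ _).symm
      _ ≤ lam * ∑ ψ : AddChar (Additive G) ℂ, ‖u ψ‖ := by
          refine mul_le_mul_of_nonneg_left ?_ hlam_nonneg
          exact Finset.sum_le_sum_of_subset_of_nonneg (Finset.erase_subset _ _)
            (fun _ _ _ => norm_nonneg _)
      _ ≤ lam * ((n : ℝ) * Real.sqrt s) := mul_le_mul_of_nonneg_left CS hlam_nonneg
  have hsR : (0 : ℝ) < s := by exact_mod_cast hs0
  have hss : Real.sqrt s * Real.sqrt s = s := Real.mul_self_sqrt hsR.le
  have hsqrt_pos : (0 : ℝ) < Real.sqrt s := Real.sqrt_pos.2 hsR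
  rw [main, norm_mul]
  have hnorm1 : ‖(1 : ℂ) / ((s : ℂ) * n)‖ = 1 / ((s : ℝ) * n) := by
    rw [norm_div, norm_mul, norm_one]
    simp
  rw [hnorm1]
  calc 1 / ((s : ℝ) * n) * ‖R‖ ≤ 1 / ((s : ℝ) * n) * (lam * ((n : ℝ) * Real.sqrt s)) := by
        refine mul_le_mul_of_nonneg_left hRnorm (by positivity)
    _ = lam / Real.sqrt s := by
        rw [eq_div_iff hsqrt_pos.ne']
        have hnR : (0:ℝ) < (n:ℝ) := by exact_mod_cast hn0
        field_simp
        linear_combination lam * hss
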